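/- arXiv:2505.01084 — 6 statements merged into one kernel-verified Lean document; each statement's English description precedes it below -/
import Mathlib

section
/- Let p be a prime and f : A → B a homomorphism of commutative rings, where A is p-adically complete and p-torsion free and B is p-adically complete. Let M be a finitely generated A-module such that M[1/p] is a finite projective A[1/p]-module. Then the canonical map (M ⊗_A B)[1/p] → ((M ⊗_A B)^∧)[1/p], obtained by inverting p in the natural map from M ⊗_A B to its p-adic completion (M ⊗_A B)^∧, is bijective; equivalently, there is a natural isomorphism M[1/p] ⊗_A B ≅ ((M ⊗_A B)^∧)[1/p]. -/
open scoped TensorProduct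



namespace CompletedBaseChangeAux

open AdicCompletion

variable {R : Type*} [CommRing R] (I : Ideal R)
variable {M N : Type*} [AddCommGroup M] [Module R M] [AddCommGroup N] [Module R N]

lemma map_of (f : M →ₗ[R] N) (x : M) :
    AdicCompletion.map I f (AdicCompletion.of I M x) = AdicCompletion.of I N (f x) := by
  ext n
  simp [AdicCompletion.map_val_apply]

lemma of_bijective [inst : IsAdicComplete I M] :
    Function.Bijective (AdicCompletion.of I M) := by
  constructor
  · intro x y hxy
    rw [← sub_eq_zero]
    apply IsHausdorff.haus (inst.toIsHausdorff)
    intro n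
    rw [SModEq.zero, ← Submodule.Quotient.mk_eq_zero]
    have h0 : AdicCompletion.of I M (x - y) = 0 := by rw [map_sub, hxy, sub_self]
    have := congrArg (fun z : AdicCompletion I M => z.val n) h0
    simpa using this
  · intro x
    obtain ⟨f, rfl⟩ := AdicCompletion.mk_surjective I M x
    obtain ⟨L, hL⟩ := IsPrecomplete.prec (inst.toIsPrecomplete) f.property
    refine ⟨L, ?_⟩
    ext n
    simpa [SModEq] using (hL n).symm

lemma of_pi_bijective [IsAdicComplete I R] (n : ℕ) :
    Function.Bijective (AdicCompletion.of I (Fin n → R)) := by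
  have key : ∀ x : Fin n → R, (piEquivFin I n) (AdicCompletion.of I (Fin n → R) x)
      = fun j => AdicCompletion.of I R (x j) := by
    intro x
    funext j
    rw [piEquivFin_apply]
    show AdicCompletion.map I (LinearMap.proj j) (AdicCompletion.of I (Fin n → R) x) = _
    rw [map_of]
    rfl
  have hb : Function.Bijective (fun (x : Fin n → R) (j : Fin n) =>
      AdicCompletion.of I R (x j)) := by
    constructor
    · intro a b hab
      funext j
      exact (of_bijective I).1 (congrFun hab j)
    · intro y
      choose a ha using fun j => (of_bijective I).2 (y j)
      exact ⟨a, funext ha⟩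
  have heq : ⇑(AdicCompletion.of I (Fin n → R)) =
      ⇑(piEquivFin I n).symm ∘ (fun (x : Fin n → R) (j : Fin n) => AdicCompletion.of I R (x j)) := by
    funext x
    apply (piEquivFin I n).injective
    rw [key]
    simp
  rw [heq]
  exact (piEquivFin I n).symm.bijective.comp hb




lemma pow_mul_injective {A : Type*} [CommRing A] {p : ℕ}
    (hAtf : Function.Injective fun a : A => (p : A) * a) (k : ℕ) :
    Function.Injective fun a : A => (p : A) ^ k * a := by
  induction k with
  | zero => intro a b h; simpa using h
  | succ k ih =>
    intro a b hab
    simp only [pow_succ, mul_assoc] at hab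
    have h1 : (p:A)^k * ((p:A) * a) = (p:A)^k * ((p:A) * b) := by
      simpa [mul_comm, mul_assoc, mul_left_comm] using hab
    exact hAtf (ih h1)

lemma uniform_pow_smul_mem {A : Type*} [CommRing A] (p : ℕ) {M P : Type*}
    [AddCommGroup M] [Module A M] [AddCommGroup P] [Module A P] {n : ℕ}
    (π : (Fin n → A) →ₗ[A] M) (hπ : Function.Surjective π) (f : M →ₗ[A] P)
    (Q : Submodule A P)
    (h : ∀ i : Fin n, ∃ k : ℕ, (p : A) ^ k • f (π (Pi.single i 1)) ∈ Q) :
    ∃ K : ℕ, ∀ m : M, (p : A) ^ K • f m ∈ Q := by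
  classical
  choose k hk using h
  set K := Finset.univ.sup k with hK
  refine ⟨K, fun m => ?_⟩
  obtain ⟨v, rfl⟩ := hπ m
  have hv : v = ∑ i, (v i) • (Pi.single i 1 : Fin n → A) := by
    funext j
    simp [Finset.sum_apply, Pi.single_apply]
  have h1 : f (π v) = ∑ i, v i • f (π (Pi.single i 1)) := by
    conv_lhs => rw [hv]
    simp
  rw [h1, Finset.smul_sum]
  refine Submodule.sum_mem Q fun i _ => ?_
  rw [smul_comm]
  refine Q.smul_mem _ ?_
  have hle : k i ≤ K := Finset.le_sup (Finset.mem_univ i)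
  have : (p:A) ^ K • f (π (Pi.single i 1)) =
      (p:A) ^ (K - k i) • ((p:A) ^ (k i) • f (π (Pi.single i 1))) := by
    rw [smul_smul, ← pow_add, Nat.sub_add_cancel hle]
  rw [this]
  exact Q.smul_mem _ (hk i)

lemma exists_retraction {A : Type*} [CommRing A] (p : ℕ)
    (hAtf : Function.Injective fun a : A => (p : A) * a)
    {M : Type*} [AddCommGroup M] [Module A M] [Module.Finite A M]
    (hMproj : Module.Projective (Localization (Submonoid.powers (p : A)))
      (LocalizedModule (Submonoid.powers (p : A)) M)) :
    ∃ (n c : ℕ) (π : (Fin n → A) →ₗ[A] M) (u : M →ₗ[A] (Fin n → A)),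
      Function.Surjective π ∧ ∀ m : M, π (u m) = (p ^ c : ℕ) • m := by
  classical
  obtain ⟨n, π, hπ⟩ := Module.Finite.exists_fin' A M
  set S := Submonoid.powers (p : A) with hS
  haveI := hMproj
  have hπl : Function.Surjective (LocalizedModule.map S π) :=
    LocalizedModule.map_surjective S π hπ
  obtain ⟨s, hs⟩ := Module.projective_lifting_property (LocalizedModule.map S π)
    LinearMap.id hπl
  set t : M →ₗ[A] LocalizedModule S (Fin n → A) :=
    (s.restrictScalars A) ∘ₗ LocalizedModule.mkLinearMap S M with ht_def
  have ht : ∀ m : M, LocalizedModule.map S π (t m) = LocalizedModule.mk m 1 := by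
    intro m
    have := LinearMap.congr_fun hs (LocalizedModule.mk m 1)
    simpa [ht_def] using this
  -- clear denominators
  have hclear : ∀ x : LocalizedModule S (Fin n → A), ∃ k : ℕ,
      (p:A) ^ k • x ∈ LinearMap.range (LocalizedModule.mkLinearMap S (Fin n → A)) := by
    intro x
    induction x using LocalizedModule.induction_on with
    | h v sden =>
      obtain ⟨k, hk⟩ := sden.2
      have hk' : (p:A) ^ k = (sden : A) := hk
      refine ⟨k, ⟨v, ?_⟩⟩
      show LocalizedModule.mk v 1 = _
      rw [LocalizedModule.smul'_mk]
      rw [show (p:A) ^ k • v = sden • v by rw [hk']; rfl]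
      exact (LocalizedModule.mk_cancel sden v).symm
  obtain ⟨K, hK⟩ := uniform_pow_smul_mem p π hπ t _ (fun i => hclear _)
  -- mkLinearMap is injective
  have hinj : Function.Injective (LocalizedModule.mkLinearMap S (Fin n → A)) := by
    intro a b hab
    have hab' : LocalizedModule.mk a (1 : S) = LocalizedModule.mk b 1 := hab
    rw [LocalizedModule.mk_eq] at hab'
    obtain ⟨w, hw⟩ := hab'
    obtain ⟨k, hk⟩ := w.2
    have hk' : (p:A) ^ k = (w : A) := hk
    simp only [one_smul] at hw
    have hw2 : (p:A) ^ k • a = (p:A) ^ k • b := by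
      rw [hk']; exact hw
    funext j
    have := congrFun hw2 j
    simp only [Pi.smul_apply, smul_eq_mul] at this
    exact pow_mul_injective hAtf k this
  set g : M →ₗ[A] LocalizedModule S (Fin n → A) := ((p:A) ^ K) • t with hg_def
  have hgmem : ∀ m : M, g m ∈ LinearMap.range (LocalizedModule.mkLinearMap S (Fin n → A)) :=
    fun m => hK m
  set e := LinearEquiv.ofInjective (LocalizedModule.mkLinearMap S (Fin n → A)) hinj with he_def
  set u0 : M →ₗ[A] (Fin n → A) := e.symm.toLinearMap ∘ₗ
    (g.codRestrict (LinearMap.range (LocalizedModule.mkLinearMap S (Fin n → A))) hgmem)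
    with hu0_def
  have hu0 : ∀ m : M, LocalizedModule.mkLinearMap S (Fin n → A) (u0 m) = (p:A) ^ K • t m := by
    intro m
    have h2 : e (u0 m) = ⟨g m, hgmem m⟩ := by
      rw [hu0_def]
      simp only [LinearMap.comp_apply, LinearEquiv.coe_coe]
      rw [LinearEquiv.apply_symm_apply]
      exact Subtype.ext rfl
    have := congrArg Subtype.val h2
    simpa [he_def, LinearEquiv.ofInjective_apply, hg_def] using this
  have hrel : ∀ m : M, LocalizedModule.mk (π (u0 m)) (1 : S) =
      LocalizedModule.mk ((p:A) ^ K • m) 1 := by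
    intro m
    calc LocalizedModule.mk (π (u0 m)) (1 : S)
        = LocalizedModule.map S π (LocalizedModule.mk (u0 m) 1) := by
          rw [LocalizedModule.map_mk]
      _ = LocalizedModule.map S π ((p:A) ^ K • t m) := by
          rw [← hu0 m]; rfl
      _ = (p:A) ^ K • LocalizedModule.map S π (t m) := by
          rw [LinearMap.map_smul_of_tower]
      _ = (p:A) ^ K • LocalizedModule.mk m 1 := by rw [ht m]
      _ = LocalizedModule.mk ((p:A) ^ K • m) 1 := LocalizedModule.smul'_mk _ _ _
  set D : M →ₗ[A] M := π ∘ₗ u0 - ((p:A) ^ K) • LinearMap.id with hD_def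
  have hDtor : ∀ i : Fin n, ∃ k : ℕ, (p:A) ^ k • D (π (Pi.single i 1)) ∈ (⊥ : Submodule A M) := by
    intro i
    have h := hrel (π (Pi.single i 1))
    rw [LocalizedModule.mk_eq] at h
    obtain ⟨w, hw⟩ := h
    obtain ⟨k, hk⟩ := w.2
    have hk' : (p:A) ^ k = (w : A) := hk
    refine ⟨k, ?_⟩
    simp only [one_smul] at hw
    have hw2 : (p:A) ^ k • π (u0 (π (Pi.single i 1))) = (p:A) ^ k • ((p:A) ^ K • π (Pi.single i 1)) := by
      rw [hk']; exact hw
    simp only [Submodule.mem_bot, hD_def, LinearMap.sub_apply, LinearMap.comp_apply,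
      LinearMap.smul_apply, LinearMap.id_apply, smul_sub, hw2, sub_self]
  obtain ⟨J, hJ⟩ := uniform_pow_smul_mem p π hπ D ⊥ hDtor
  refine ⟨n, K + J, π, ((p:A) ^ J) • u0, hπ, fun m => ?_⟩
  have hD0 : (p:A) ^ J • D m = 0 := by simpa using hJ m
  have hDm : (p:A) ^ J • π (u0 m) = (p:A) ^ J • ((p:A) ^ K • m) := by
    have : D m = π (u0 m) - (p:A) ^ K • m := rfl
    rw [this, smul_sub, sub_eq_zero] at hD0
    exact hD0
  have : π (((p:A) ^ J • u0) m) = (p:A) ^ (K + J) • m := by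
    simp only [LinearMap.smul_apply, map_smul]
    rw [hDm, smul_smul, ← pow_add, add_comm]
  rw [this]
  rw [show ((p:A) ^ (K + J)) = ((p ^ (K + J) : ℕ) : A) by push_cast; ring]
  rw [Nat.cast_smul_eq_nsmul]


end CompletedBaseChangeAux


open scoped TensorProduct


section MainProof

open CompletedBaseChangeAux AdicCompletion

/-- **Completed base change and inverting `p`.** Let `p` be a prime and `A → B` a homomorphism
of commutative rings, with `A` `p`-adically complete and `p`-torsion free and `B` `p`-adically
complete. Let `M` be a finitely generated `A`-module such that `M[1/p]` is a finite projective
`A[1/p]`-module. Then the canonical map `(M ⊗_A B)[1/p] → ((M ⊗_A B)^∧)[1/p]`, obtained by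
inverting `p` in the natural map from `M ⊗_A B` to its `p`-adic completion, is bijective. -/
theorem localized_adicCompletion_of_baseChange_bijective
    (p : ℕ) (hp : p.Prime)
    {A B : Type*} [CommRing A] [CommRing B] [Algebra A B]
    (hAcomplete : IsAdicComplete (Ideal.span {(p : A)}) A)
    (hAtf : Function.Injective fun a : A => (p : A) * a)
    (hBcomplete : IsAdicComplete (Ideal.span {(p : B)}) B)
    {M : Type*} [AddCommGroup M] [Module A M] [Module.Finite A M]
    (hMfin : Module.Finite (Localization (Submonoid.powers (p : A)))
      (LocalizedModule (Submonoid.powers (p : A)) M))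
    (hMproj : Module.Projective (Localization (Submonoid.powers (p : A)))
      (LocalizedModule (Submonoid.powers (p : A)) M)) :
    Function.Bijective
      (LocalizedModule.map (Submonoid.powers (p : B))
        (AdicCompletion.of (Ideal.span {(p : B)}) (B ⊗[A] M))) := by

  classical
  haveI := hBcomplete
  set I : Ideal B := Ideal.span {(p : B)} with hI
  set SB : Submonoid B := Submonoid.powers (p : B) with hSB
  obtain ⟨n, c, π, u, hπ, hcomp⟩ := exists_retraction p hAtf hMproj
  set πB : B ⊗[A] (Fin n → A) →ₗ[B] B ⊗[A] M := π.baseChange B with hπB_def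
  set uB : B ⊗[A] M →ₗ[B] B ⊗[A] (Fin n → A) := u.baseChange B with huB_def
  have hπB : Function.Surjective πB := by
    intro z
    induction z using TensorProduct.induction_on with
    | zero => exact ⟨0, _root_.map_zero _⟩
    | tmul b m =>
      obtain ⟨v, hv⟩ := hπ m
      exact ⟨b ⊗ₜ v, by simp [hπB_def, hv]⟩
    | add x y hx hy =>
      obtain ⟨x', hx'⟩ := hx
      obtain ⟨y', hy'⟩ := hy
      exact ⟨x' + y', by rw [map_add, hx', hy']⟩
  have hBc : ∀ z : B ⊗[A] M, πB (uB z) = (p ^ c : ℕ) • z := by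
    intro z
    induction z using TensorProduct.induction_on with
    | zero => simp
    | tmul b m =>
      have : πB (uB (b ⊗ₜ m)) = b ⊗ₜ (π (u m)) := by
        simp [hπB_def, huB_def]
      rw [this, hcomp m]
      have := map_nsmul (TensorProduct.mk A B M b) (p ^ c) m
      simpa using this
    | add x y hx hy =>
      rw [map_add, map_add, hx, hy, smul_add]
  -- bijectivity of `of` on the free base-changed module
  set e : (B ⊗[A] (Fin n → A)) ≃ₗ[B] (Fin n → B) :=
    TensorProduct.piScalarRight A B B (Fin n) with he_def
  have hofBn : Function.Bijective (AdicCompletion.of I (Fin n → B)) :=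
    of_pi_bijective I n
  have hofP : Function.Bijective (AdicCompletion.of I (B ⊗[A] (Fin n → A))) := by
    constructor
    · intro a b hab
      apply e.injective
      apply hofBn.1
      have h1 := CompletedBaseChangeAux.map_of I (e.toLinearMap) a
      have h2 := CompletedBaseChangeAux.map_of I (e.toLinearMap) b
      simp only [LinearEquiv.coe_coe] at h1 h2
      rw [← h1, ← h2, hab]
    · intro y
      obtain ⟨v, hv⟩ := hofBn.2 ((AdicCompletion.congr I e) y)
      refine ⟨e.symm v, ?_⟩
      apply (AdicCompletion.congr I e).injective
      rw [AdicCompletion.congr_apply, CompletedBaseChangeAux.map_of I e.toLinearMap]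
      simp only [LinearEquiv.coe_coe, LinearEquiv.apply_symm_apply]
      rw [hv, AdicCompletion.congr_apply]
  set F := AdicCompletion.of I (B ⊗[A] M) with hF_def
  have hFsurj : Function.Surjective F := by
    intro z
    obtain ⟨w, hw⟩ := AdicCompletion.map_surjective I hπB z
    obtain ⟨x, hx⟩ := hofP.2 w
    refine ⟨πB x, ?_⟩
    show AdicCompletion.of I (B ⊗[A] M) (πB x) = z
    rw [← CompletedBaseChangeAux.map_of I πB, hx, hw]
  constructor
  · -- injectivity
    have hker : ∀ d : LocalizedModule SB (B ⊗[A] M),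
        LocalizedModule.map SB F d = 0 → d = 0 := by
      intro d hd
      induction d using LocalizedModule.induction_on with
      | h m sden =>
        rw [LocalizedModule.map_mk] at hd
        have hd' : LocalizedModule.mk (F m) sden = LocalizedModule.mk 0 sden := by
          rw [hd, LocalizedModule.zero_mk]
        rw [LocalizedModule.mk_eq] at hd'
        obtain ⟨w, hw⟩ := hd'
        have hw' : ((w : B) * (sden : B)) • F m = 0 := by
          have : w • sden • F m = w • sden • (0 : AdicCompletion I (B ⊗[A] M)) := hw
          simpa [Submonoid.smul_def, smul_smul] using this
        have h0 : F (((w : B) * (sden : B)) • m) = 0 := by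
          rw [map_smul]; exact hw'
        have h1 : AdicCompletion.of I (B ⊗[A] (Fin n → A)) (uB (((w : B) * (sden : B)) • m))
            = 0 := by
          rw [← CompletedBaseChangeAux.map_of I uB, h0, _root_.map_zero]
        have h2 : uB (((w : B) * (sden : B)) • m) = 0 := by
          apply hofP.1
          rw [h1, _root_.map_zero]
        have h3 : (p ^ c : ℕ) • (((w : B) * (sden : B)) • m) = 0 := by
          rw [← hBc, h2, _root_.map_zero]
        have h4 : ((p : B) ^ c * ((w : B) * (sden : B))) • m = 0 := by
          rw [← smul_smul]
          rw [show ((p : B) ^ c) = ((p ^ c : ℕ) : B) by push_cast; ring]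
          rw [Nat.cast_smul_eq_nsmul]
          exact h3
        have hmem : (p : B) ^ c ∈ SB := pow_mem (Submonoid.mem_powers _) c
        have : LocalizedModule.mk m sden = LocalizedModule.mk (0 : B ⊗[A] M) sden := by
          rw [LocalizedModule.mk_eq]
          refine ⟨⟨(p : B) ^ c, hmem⟩ * w, ?_⟩
          rw [smul_zero, smul_zero]
          rw [Submonoid.smul_def, Submonoid.smul_def, smul_smul, Submonoid.coe_mul]
          rw [show ((p : B) ^ c * (w : B)) * (sden : B) = (p : B) ^ c * ((w : B) * (sden : B))
            by ring]
          exact h4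
        rw [this, LocalizedModule.zero_mk]
    intro x y hxy
    have : LocalizedModule.map SB F (x - y) = 0 := by rw [map_sub, hxy, sub_self]
    have := hker _ this
    rwa [sub_eq_zero] at this
  · exact LocalizedModule.map_surjective SB F hFsurj

end MainProof
end

section
/- Let p be a prime and A a p-adically complete, p-torsion free commutative ring. Let M be a finitely generated p-torsion free A-module such that M[1/p] is a finite projective A[1/p]-module. Then M is p-adically complete, i.e. the canonical map M → lim_n M/p^n M is bijective. -/
private lemma mem_span_singleton_smul_top_iff {A : Type*} [CommRing A] {N : Type*}
    [AddCommGroup N] [Module A N] (b : A) (x : N) :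
    x ∈ ((Ideal.span {b} : Ideal A) • ⊤ : Submodule A N) ↔ ∃ y, b • y = x := by
  constructor
  · intro h
    refine Submodule.smul_induction_on h ?_ ?_
    · intro a ha n _
      rcases Ideal.mem_span_singleton'.mp ha with ⟨c, rfl⟩
      exact ⟨c • n, by rw [smul_smul, mul_comm b c, ← smul_smul]⟩
    · rintro u v ⟨y, rfl⟩ ⟨z, rfl⟩
      exact ⟨y + z, by rw [smul_add]⟩
  · rintro ⟨y, rfl⟩
    exact Submodule.smul_mem_smul (Ideal.mem_span_singleton_self b) trivial

private lemma smodeq_span_pow_iff {A : Type*} [CommRing A] {N : Type*} [AddCommGroup N]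
    [Module A N] (a : A) (n : ℕ) (x y : N) :
    x ≡ y [SMOD ((Ideal.span {a} : Ideal A) ^ n • ⊤ : Submodule A N)] ↔
      ∃ z, a ^ n • z = x - y := by
  rw [SModEq.sub_mem, Ideal.span_singleton_pow, mem_span_singleton_smul_top_iff]


private lemma pi_precomplete {A : Type*} [CommRing A] (a : A) (r : ℕ)
    (h : IsPrecomplete (Ideal.span {a}) A) : IsPrecomplete (Ideal.span {a}) (Fin r → A) := by
  constructor
  intro f hf
  have key : ∀ i : Fin r, ∃ L : A, ∀ n, f n i ≡ L
      [SMOD ((Ideal.span {a} : Ideal A) ^ n • ⊤ : Submodule A A)] := by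
    intro i
    apply h.prec
    intro m n hmn
    rcases (smodeq_span_pow_iff a m (f m) (f n)).mp (hf hmn) with ⟨z, hz⟩
    rw [smodeq_span_pow_iff]
    refine ⟨z i, ?_⟩
    have := congrFun hz i
    simpa using this
  choose L hL using key
  refine ⟨L, fun n => ?_⟩
  have : ∀ i, ∃ z, a ^ n • z = f n i - L i := fun i =>
    (smodeq_span_pow_iff a n (f n i) (L i)).mp (hL i n)
  choose z hz using this
  rw [smodeq_span_pow_iff]
  exact ⟨z, by funext i; simpa using hz i⟩

/-- Precompleteness of a finitely generated module over a precomplete ring. -/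
private lemma prec_of_fg {A : Type*} [CommRing A] (a : A)
    (hA : IsPrecomplete (Ideal.span {a}) A)
    {M : Type*} [AddCommGroup M] [Module A M] {r : ℕ} (π : (Fin r → A) →ₗ[A] M)
    (hπ : Function.Surjective π) :
    IsPrecomplete (Ideal.span {a}) M := by
  constructor
  intro f hf
  have key : ∀ n, ∃ b : Fin r → A, π (a ^ n • b) = f (n + 1) - f n := by
    intro n
    rcases (smodeq_span_pow_iff a n (f (n + 1)) (f n)).mp (hf (Nat.le_succ n)).symm with ⟨z, hz⟩
    rcases hπ z with ⟨b, hb⟩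
    exact ⟨b, by rw [map_smul, hb, hz]⟩
  choose b hb using key
  rcases hπ (f 0) with ⟨a0, ha0⟩
  let aa : ℕ → (Fin r → A) := fun n => Nat.rec a0 (fun n an => an + a ^ n • b n) n
  have haa_succ : ∀ n, aa (n + 1) = aa n + a ^ n • b n := fun n => rfl
  have haπ : ∀ n, π (aa n) = f n := by
    intro n
    induction n with
    | zero => exact ha0
    | succ n ih => rw [haa_succ, map_add, ih, hb n]; abel
  have hdiff : ∀ n k, ∃ z, aa (n + k) - aa n = a ^ n • z := by
    intro n k
    induction k with
    | zero => exact ⟨0, by simp⟩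
    | succ k ih =>
      rcases ih with ⟨z, hz⟩
      refine ⟨z + a ^ k • b (n + k), ?_⟩
      rw [← Nat.add_assoc, haa_succ, smul_add, ← hz, pow_add, mul_smul, smul_comm]
      abel
  have hcauchy : ∀ {m n : ℕ}, m ≤ n → aa m ≡ aa n
      [SMOD ((Ideal.span {a} : Ideal A) ^ m • ⊤ : Submodule A (Fin r → A))] := by
    intro m n hmn
    rcases hdiff m (n - m) with ⟨z, hz⟩
    rw [Nat.add_sub_cancel' hmn] at hz
    rw [smodeq_span_pow_iff]
    exact ⟨-z, by rw [smul_neg, ← hz]; abel⟩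
  rcases (pi_precomplete a r hA).prec hcauchy with ⟨L, hL⟩
  refine ⟨π L, fun n => ?_⟩
  rcases (smodeq_span_pow_iff a n (aa n) L).mp (hL n) with ⟨z, hz⟩
  rw [smodeq_span_pow_iff]
  exact ⟨π z, by rw [← map_smul, hz, map_sub, haπ]⟩

private lemma haus_main (p : ℕ) (_hp : p.Prime)
    {A : Type*} [CommRing A]
    (hAhaus : IsHausdorff (Ideal.span {(p : A)}) A)
    (hAtf : Function.Injective fun a : A => (p : A) * a)
    {M : Type*} [AddCommGroup M] [Module A M]
    (hMtf : Function.Injective fun x : M => (p : A) • x)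
    (hMproj : Module.Projective (Localization (Submonoid.powers (p : A)))
      (LocalizedModule (Submonoid.powers (p : A)) M))
    {r : ℕ} (π : (Fin r → A) →ₗ[A] M) (hπ : Function.Surjective π) :
    IsHausdorff (Ideal.span {(p : A)}) M := by
  haveI := hMproj
  set S : Submonoid A := Submonoid.powers (p : A) with hS
  have hSnzd : S ≤ nonZeroDivisors A := by
    have hpnzd : (p : A) ∈ nonZeroDivisors A := by
      rw [mem_nonZeroDivisors_iff_right]
      intro c hc
      exact hAtf (show (p : A) * c = (p : A) * 0 by rw [mul_comm] at hc; simpa using hc)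
    rintro z ⟨k, rfl⟩
    exact pow_mem hpnzd k
  have halg : Function.Injective (algebraMap A (Localization S)) :=
    IsLocalization.injective (Localization S) hSnzd
  -- generators of the localized module
  set w : Fin r → LocalizedModule S M :=
    fun j => LocalizedModule.mkLinearMap S M (π (Pi.single j 1)) with hw
  set g : (Fin r → Localization S) →ₗ[Localization S] LocalizedModule S M :=
    Fintype.linearCombination (Localization S) w with hg
  set φ : (Fin r → A) →ₗ[A] LocalizedModule S M :=
    (LocalizedModule.mkLinearMap S M) ∘ₗ π with hφdef
  have hsingle : ∀ v : Fin r → A, (∑ j, v j • (Pi.single j (1 : A) : Fin r → A)) = v := by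
    intro v
    funext i
    simp [Pi.single_apply, Finset.sum_ite_eq', mul_comm]
  have hφ : ∀ v : Fin r → A, φ v = ∑ j, v j • w j := by
    intro v
    conv_lhs => rw [← hsingle v]
    rw [map_sum]
    simp [hφdef, hw]
  have hgmk : ∀ (v : Fin r → A) (s : S),
      g (fun j => Localization.mk (v j) s) = LocalizedModule.mk (π v) s := by
    intro v s
    have h1 : ∀ j, (Localization.mk (v j) s : Localization S)
        = Localization.mk 1 s * algebraMap A (Localization S) (v j) := by
      intro j
      rw [← Localization.mk_one_eq_algebraMap, Localization.mk_mul, one_mul, mul_one]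
    rw [hg, Fintype.linearCombination_apply]
    simp_rw [h1, mul_smul, algebraMap_smul, ← Finset.smul_sum]
    rw [← hφ v, hφdef]
    simp only [LinearMap.coe_comp, Function.comp_apply, LocalizedModule.mkLinearMap_apply]
    rw [LocalizedModule.mk_smul_mk, one_smul, mul_one]
  have hgsurj : Function.Surjective g := by
    intro z
    induction z using LocalizedModule.induction_on with
    | h m s =>
      rcases hπ m with ⟨v, rfl⟩
      exact ⟨fun j => Localization.mk (v j) s, hgmk v s⟩
  obtain ⟨σ, hσ⟩ := Module.projective_lifting_property g LinearMap.id hgsurj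
  obtain ⟨b, hb⟩ := IsLocalization.exist_integer_multiples S Finset.univ
    (fun ji : Fin r × Fin r => σ (w ji.1) ji.2)
  have hint : ∀ m : M, ∀ i, IsLocalization.IsInteger A
      ((b : A) • σ (LocalizedModule.mkLinearMap S M m) i) := by
    intro m i
    rcases hπ m with ⟨v, rfl⟩
    have : LocalizedModule.mkLinearMap S M (π v) = ∑ j, v j • w j := hφ v
    rw [this, map_sum]
    have hcoord : (∑ j, σ (v j • w j)) i = ∑ j, (σ (v j • w j)) i := by
      simp [Finset.sum_apply]
    rw [hcoord]
    rw [Finset.smul_sum]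
    refine Subsemiring.sum_mem _ fun j _ => ?_
    have : σ (v j • w j) = v j • σ (w j) := σ.map_smul_of_tower (v j) (w j)
    rw [this]
    have : ((v j • σ (w j)) i) = v j • (σ (w j) i) := rfl
    rw [this, smul_comm]
    exact IsLocalization.isInteger_smul (hb (j, i) (Finset.mem_univ _))
  constructor
  intro x hx
  have hx' : ∀ n : ℕ, ∃ y : M, (p : A) ^ n • y = x := by
    intro n
    rcases (smodeq_span_pow_iff ((p : A)) n x 0).mp (hx n) with ⟨z, hz⟩
    exact ⟨z, by simpa using hz⟩
  choose y hy using hx'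
  have hcx : ∀ i, ∃ a : A, algebraMap A (Localization S) a
      = (b : A) • σ (LocalizedModule.mkLinearMap S M x) i :=
    fun i => RingHom.mem_rangeS.mp (hint x i)
  have hdx : ∀ n i, ∃ a : A, algebraMap A (Localization S) a
      = (b : A) • σ (LocalizedModule.mkLinearMap S M (y n)) i :=
    fun n i => RingHom.mem_rangeS.mp (hint (y n) i)
  choose c hc using hcx
  choose d hd using hdx
  have hkey : ∀ n i, c i = (p : A) ^ n * d n i := by
    intro n i
    apply halg
    rw [map_mul, hc i, hd n i]
    have h1 : LocalizedModule.mkLinearMap S M x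
        = ((p : A) ^ n) • LocalizedModule.mkLinearMap S M (y n) := by
      rw [← map_smul, hy n]
    rw [h1, LinearMap.map_smul_of_tower]
    have h2 : (((p : A) ^ n • σ (LocalizedModule.mkLinearMap S M (y n))) i)
        = (p : A) ^ n • (σ (LocalizedModule.mkLinearMap S M (y n)) i) := rfl
    rw [h2, smul_comm, Algebra.smul_def]
  have hc0 : ∀ i, c i = 0 := by
    intro i
    refine hAhaus.haus (c i) fun n => ?_
    rw [smodeq_span_pow_iff]
    exact ⟨d n i, by rw [smul_eq_mul, ← hkey n i, sub_zero]⟩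
  have hσ0 : σ (LocalizedModule.mkLinearMap S M x) = 0 := by
    funext i
    have h0 : (b : A) • σ (LocalizedModule.mkLinearMap S M x) i = 0 := by
      rw [← hc i, hc0 i, map_zero]
    have hbu : IsUnit (algebraMap A (Localization S) (b : A)) :=
      IsLocalization.map_units (Localization S) b
    rw [Algebra.smul_def] at h0
    have := hbu.mul_right_eq_zero.mp h0
    simpa using this
  have hmk0 : LocalizedModule.mkLinearMap S M x = 0 := by
    have h2 := LinearMap.congr_fun hσ (LocalizedModule.mkLinearMap S M x)
    simp only [LinearMap.coe_comp, Function.comp_apply, LinearMap.id_coe, id_eq] at h2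
    rw [hσ0, map_zero] at h2
    exact h2.symm
  rw [LocalizedModule.mkLinearMap_apply,
    show (0 : LocalizedModule S M) = LocalizedModule.mk 0 1 from
      (LocalizedModule.zero_mk 1).symm] at hmk0
  rcases LocalizedModule.mk_eq.mp hmk0 with ⟨u, hu⟩
  simp only [Submonoid.smul_def, one_smul, smul_zero, OneMemClass.coe_one] at hu
  rcases u.2 with ⟨k, hk⟩
  have hk' : (p : A) ^ k = (u : A) := hk
  have hpk : (p : A) ^ k • x = 0 := by rw [hk']; exact hu
  have hind : ∀ (k : ℕ) (z : M), (p : A) ^ k • z = 0 → z = 0 := by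
    intro k
    induction k with
    | zero => intro z hz; simpa using hz
    | succ k ih =>
      intro z hz
      have h3 : (p : A) • ((p : A) ^ k • z) = 0 := by
        rw [smul_smul, ← pow_succ']; exact hz
      exact ih z (hMtf (show (p : A) • ((p : A) ^ k • z) = (p : A) • (0 : M) by
        rw [smul_zero]; exact h3))
  exact hind k x hpk

/-- **Automatic `p`-adic completeness.** Let `p` be a prime and `A` a `p`-adically complete,
`p`-torsion free commutative ring. Let `M` be a finitely generated `p`-torsion free `A`-module
such that `M[1/p]` is a finite projective `A[1/p]`-module. Then `M` is `p`-adically complete,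
i.e. the canonical map `M → lim_n M/p^n M` is bijective. -/
theorem isAdicComplete_of_localization_finite_projective
    (p : ℕ) (hp : p.Prime)
    {A : Type*} [CommRing A]
    (hAcomplete : IsAdicComplete (Ideal.span {(p : A)}) A)
    (hAtf : Function.Injective fun a : A => (p : A) * a)
    {M : Type*} [AddCommGroup M] [Module A M] [Module.Finite A M]
    (hMtf : Function.Injective fun x : M => (p : A) • x)
    (hMfin : Module.Finite (Localization (Submonoid.powers (p : A)))
      (LocalizedModule (Submonoid.powers (p : A)) M))
    (hMproj : Module.Projective (Localization (Submonoid.powers (p : A)))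
      (LocalizedModule (Submonoid.powers (p : A)) M)) :
    IsAdicComplete (Ideal.span {(p : A)}) M := by
  obtain ⟨r, π, hπ⟩ := Module.Finite.exists_fin' A M
  haveI h1 : IsHausdorff (Ideal.span {(p : A)}) M :=
    haus_main p hp hAcomplete.toIsHausdorff hAtf hMtf hMproj π hπ
  haveI h2 : IsPrecomplete (Ideal.span {(p : A)}) M :=
    prec_of_fg (p : A) hAcomplete.toIsPrecomplete π hπ
  exact ⟨⟩
end

section
/- Let n ≥ 1 be an integer, P a uniquely n-divisible commutative monoid, and π : Q → R a surjective homomorphism of commutative monoids. Assume there exists an integer k ≥ 1 such that for all q₁, q₂ ∈ Q with π(q₁) = π(q₂) one has q₁^(n^k) = q₂^(n^k). Then the map Hom(P, Q) → Hom(P, R) given by composition with π is bijective. -/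
private lemma pow_pow_bijective' {P : Type*} [CommMonoid P] {n : ℕ}
    (hP : Function.Bijective fun x : P => x ^ n) (k : ℕ) :
    Function.Bijective fun x : P => x ^ n ^ k := by
  induction k with
  | zero => simp only [pow_zero, pow_one]; exact Function.bijective_id
  | succ k ih =>
    have h : (fun x : P => x ^ n ^ (k + 1)) = (fun x : P => x ^ n) ∘ fun x : P => x ^ n ^ k := by
      funext x; simp [pow_succ, pow_mul]
    rw [h]; exact hP.comp ih

/-- **Monoid-lifting lemma.** Let `n ≥ 1`, let `P` be a uniquely `n`-divisible commutative
monoid, and let `π : Q → R` be a surjective homomorphism of commutative monoids. Assume there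
is `k ≥ 1` such that `π q₁ = π q₂` implies `q₁ ^ (n ^ k) = q₂ ^ (n ^ k)`. Then composition with
`π` defines a bijection `Hom(P, Q) → Hom(P, R)`. -/
theorem monoidHom_comp_surjection_bijective
    {P Q R : Type*} [CommMonoid P] [CommMonoid Q] [CommMonoid R]
    (n : ℕ) (hn : 1 ≤ n)
    (hP : Function.Bijective fun x : P => x ^ n)
    (π : Q →* R) (hπ : Function.Surjective π)
    (hk : ∃ k : ℕ, 1 ≤ k ∧ ∀ q₁ q₂ : Q, π q₁ = π q₂ → q₁ ^ n ^ k = q₂ ^ n ^ k) :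
    Function.Bijective fun f : P →* Q => π.comp f := by
  obtain ⟨k, -, hQ⟩ := hk
  have hPN : Function.Bijective fun x : P => x ^ n ^ k := pow_pow_bijective' hP k
  set N := n ^ k with hNdef
  let e : P ≃ P := Equiv.ofBijective _ hPN
  have he : ∀ x : P, (e.symm x) ^ N = x := fun x => e.apply_symm_apply x
  have heS : ∀ x y : P, e.symm (x * y) = e.symm x * e.symm y := by
    intro x y
    apply hPN.injective
    show (e.symm (x * y)) ^ N = (e.symm x * e.symm y) ^ N
    rw [he, mul_pow, he, he]
  have he1 : e.symm (1 : P) = 1 := by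
    apply hPN.injective
    show (e.symm 1) ^ N = (1 : P) ^ N
    rw [he, one_pow]
  constructor
  · intro f g hfg
    have hfg' : ∀ x : P, π (f x) = π (g x) := fun x =>
      DFunLike.congr_fun (α := P) hfg x
    ext x
    calc f x = f ((e.symm x) ^ N) := by rw [he]
      _ = (f (e.symm x)) ^ N := by rw [map_pow]
      _ = (g (e.symm x)) ^ N := hQ _ _ (hfg' _)
      _ = g ((e.symm x) ^ N) := by rw [map_pow]
      _ = g x := by rw [he]
  · intro g
    set s := Function.surjInv hπ with hsdef
    have hs : ∀ r : R, π (s r) = r := Function.surjInv_eq hπ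
    refine ⟨{ toFun := fun x => (s (g (e.symm x))) ^ N, map_one' := ?_, map_mul' := ?_ }, ?_⟩
    · have : π (s (g (e.symm 1))) = π 1 := by rw [hs, he1, map_one, map_one]
      show s (g (e.symm 1)) ^ N = 1
      rw [hQ _ _ this, one_pow]
    · intro x y
      have h1 : π (s (g (e.symm (x * y)))) = π (s (g (e.symm x)) * s (g (e.symm y))) := by
        rw [hs, heS, map_mul g, map_mul π, hs, hs]
      rw [hQ _ _ h1, mul_pow]
    · ext x
      simp only [MonoidHom.comp_apply, MonoidHom.coe_mk, OneHom.coe_mk]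
      rw [map_pow, hs, ← map_pow, he]
end

section
/- Let n ≥ 1 be an integer, A a commutative ring, and I an ideal of A such that I^k = 0 for some k ≥ 1 and such that the image of n in A lies in I. Let P be a uniquely n-divisible commutative monoid. Then the map Hom(P, (A, ·)) → Hom(P, (A/I, ·)), induced by the quotient map A → A/I on underlying multiplicative monoids, is bijective. -/
private lemma pow_sub_pow_mem_aux {A : Type*} [CommRing A] (I : Ideal A) (n : ℕ)
    (hnI : (n : A) ∈ I) {a b : A} (h : a - b ∈ I) {j : ℕ} (hj : a - b ∈ I ^ j) :
    a ^ n - b ^ n ∈ I ^ (j + 1) := by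
  have hs : (∑ i ∈ Finset.range n, a ^ i * b ^ (n - 1 - i)) ∈ I := by
    rw [← Ideal.Quotient.eq_zero_iff_mem]
    have hab : Ideal.Quotient.mk I a = Ideal.Quotient.mk I b := Ideal.Quotient.eq.mpr h
    rw [map_sum]
    have hterm : ∀ i ∈ Finset.range n,
        Ideal.Quotient.mk I (a ^ i * b ^ (n - 1 - i)) = (Ideal.Quotient.mk I b) ^ (n - 1) := by
      intro i hi
      rw [Finset.mem_range] at hi
      rw [map_mul, map_pow, map_pow, hab, ← pow_add]
      congr 1
      omega
    rw [Finset.sum_congr rfl hterm, Finset.sum_const, Finset.card_range, nsmul_eq_mul]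
    have hn0 : ((n : A ⧸ I)) = 0 := by
      rw [← map_natCast (Ideal.Quotient.mk I) n, Ideal.Quotient.eq_zero_iff_mem]
      exact hnI
    rw [hn0, zero_mul]
  have hg := geom_sum₂_mul a b n
  rw [← hg, pow_succ']
  exact Ideal.mul_mem_mul hs hj

private lemma pow_pow_sub_mem_aux {A : Type*} [CommRing A] (I : Ideal A) (n : ℕ)
    (hnI : (n : A) ∈ I) {a b : A} (h : a - b ∈ I) :
    ∀ m : ℕ, a ^ n ^ m - b ^ n ^ m ∈ I ^ (m + 1) := by
  intro m
  induction m with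
  | zero => simpa using h
  | succ m ih =>
    have h2 : a ^ n ^ m - b ^ n ^ m ∈ I := Ideal.pow_le_self (Nat.succ_ne_zero m) ih
    have h3 := pow_sub_pow_mem_aux I n hnI h2 ih
    rwa [← pow_mul, ← pow_mul, ← pow_succ] at h3

/-- **Monoid-lifting lemma for nilpotent ring quotients.** Let `n ≥ 1`, `A` a commutative ring,
`I` an ideal with `I ^ k = 0` for some `k ≥ 1` and with `n ∈ I`, and let `P` be a uniquely
`n`-divisible commutative monoid. Then composition with the quotient map `A → A/I` (as a map of
underlying multiplicative monoids) gives a bijection `Hom(P, (A, ·)) → Hom(P, (A/I, ·))`. -/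
theorem monoidHom_comp_quotient_mk_bijective
    {A : Type*} [CommRing A] (n : ℕ) (hn : 1 ≤ n) (I : Ideal A)
    (hI : ∃ k : ℕ, 1 ≤ k ∧ I ^ k = ⊥) (hnI : (n : A) ∈ I)
    {P : Type*} [CommMonoid P]
    (hP : Function.Bijective fun x : P => x ^ n) :
    Function.Bijective fun f : P →* A => (Ideal.Quotient.mk I).toMonoidHom.comp f := by
  obtain ⟨k, hk1, hk⟩ := hI
  set N := n ^ (k - 1) with hN
  have hEq : ∀ a b : A, a - b ∈ I → a ^ N = b ^ N := by
    intro a b h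
    have h2 := pow_pow_sub_mem_aux I n hnI h (k - 1)
    rw [Nat.sub_add_cancel hk1, hk, Ideal.mem_bot, sub_eq_zero] at h2
    exact h2
  have hPN : ∀ m : ℕ, Function.Bijective fun x : P => x ^ n ^ m := by
    intro m
    induction m with
    | zero => simp only [pow_zero, pow_one]; exact Function.bijective_id
    | succ m ih =>
      have hc : (fun x : P => x ^ n ^ (m + 1)) =
          (fun x : P => x ^ n ^ m) ∘ (fun x : P => x ^ n) := by
        funext x
        simp only [Function.comp_apply, ← pow_mul, pow_succ]
        ring_nf
      rw [hc]
      exact ih.comp hP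
  constructor
  · intro f g hfg
    ext x
    obtain ⟨y, rfl⟩ := (hPN (k - 1)).2 x
    have h1 : Ideal.Quotient.mk I (f y) = Ideal.Quotient.mk I (g y) :=
      DFunLike.congr_fun hfg y
    have h2 := hEq _ _ (Ideal.Quotient.eq.mp h1)
    simpa [map_pow] using h2
  · intro g
    set E := Equiv.ofBijective _ (hPN (k - 1)) with hE
    have hEapp : ∀ x : P, E x = x ^ N := fun x => rfl
    have hEsymm : ∀ x : P, (E.symm x) ^ N = x := fun x => E.apply_symm_apply x
    set L : A ⧸ I → A := Function.surjInv Ideal.Quotient.mk_surjective with hL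
    have hLspec : ∀ a, Ideal.Quotient.mk I (L a) = a :=
      Function.surjInv_eq Ideal.Quotient.mk_surjective
    have hmulsymm : ∀ x y : P, E.symm (x * y) = E.symm x * E.symm y := by
      intro x y
      apply E.injective
      rw [E.apply_symm_apply, hEapp, mul_pow, hEsymm, hEsymm]
    refine ⟨{ toFun := fun x => (L (g (E.symm x))) ^ N, map_one' := ?_, map_mul' := ?_ }, ?_⟩
    · show (L (g (E.symm 1))) ^ N = 1
      have h1 : E.symm 1 = 1 := by
        apply E.injective
        rw [E.apply_symm_apply, hEapp, one_pow]
      rw [h1, map_one]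
      have h2 : L 1 - 1 ∈ I := by
        rw [← Ideal.Quotient.eq, hLspec, map_one]
      rw [hEq _ 1 h2, one_pow]
    · intro x y
      show (L (g (E.symm (x * y)))) ^ N = (L (g (E.symm x))) ^ N * (L (g (E.symm y))) ^ N
      rw [hmulsymm, map_mul]
      have h2 : L (g (E.symm x) * g (E.symm y)) - L (g (E.symm x)) * L (g (E.symm y)) ∈ I := by
        rw [← Ideal.Quotient.eq, hLspec, map_mul, hLspec, hLspec]
      rw [hEq _ _ h2, mul_pow]
    · ext x
      simp only [MonoidHom.coe_comp, RingHom.toMonoidHom_eq_coe, MonoidHom.coe_coe,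
        Function.comp_apply, MonoidHom.coe_mk, OneHom.coe_mk]
      rw [map_pow, hLspec, ← map_pow, hEsymm]
end

section
/- Let p be a prime, A a commutative ring that is p-adically separated (i.e. ⋂_{n≥1} p^n A = 0), M a commutative monoid, and δ : M → A a function satisfying δ(m m') = δ(m) + δ(m') + p·δ(m)·δ(m') for all m, m' ∈ M. If m ∈ M admits a p^n-th root for every n ≥ 1 (i.e. for every n there exists m_n ∈ M with m_n^(p^n) = m), then δ(m) = 0. -/
/-- Key computation: `δ (z ^ k) = k • δ z + p * (δ z)^2 * t` for some `t`. -/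
lemma deltaLog_pow_aux
    (p : ℕ) {A : Type*} [CommRing A] {M : Type*} [CommMonoid M]
    (δ : M → A)
    (hδ : ∀ m m' : M, δ (m * m') = δ m + δ m' + (p : A) * δ m * δ m')
    (z : M) : ∀ k : ℕ, 1 ≤ k → ∃ t : A,
      δ (z ^ k) = (k : A) * δ z + (p : A) * δ z ^ 2 * t := by
  intro k hk
  induction k, hk using Nat.le_induction with
  | base => exact ⟨0, by simp⟩
  | succ k hk ih =>
    obtain ⟨t, ht⟩ := ih
    refine ⟨t + k + (p : A) * δ z * t, ?_⟩
    rw [pow_succ, hδ, ht]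
    push_cast
    ring

/-- **δ_log vanishes on `p`-divisible elements.** Let `p` be a prime, `A` a commutative ring
which is `p`-adically separated (`⋂_{n ≥ 1} p^n A = 0`), `M` a commutative monoid and
`δ : M → A` a function satisfying `δ (m * m') = δ m + δ m' + p * δ m * δ m'`. If `m ∈ M` admits
a `p^n`-th root for every `n ≥ 1`, then `δ m = 0`. -/
theorem deltaLog_eq_zero_of_p_divisible
    (p : ℕ) (hp : p.Prime)
    {A : Type*} [CommRing A]
    (hsep : ∀ a : A, (∀ n : ℕ, 1 ≤ n → a ∈ Ideal.span {(p : A) ^ n}) → a = 0)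
    {M : Type*} [CommMonoid M]
    (δ : M → A)
    (hδ : ∀ m m' : M, δ (m * m') = δ m + δ m' + (p : A) * δ m * δ m')
    (m : M) (hm : ∀ n : ℕ, 1 ≤ n → ∃ y : M, y ^ p ^ n = m) :
    δ m = 0 := by
  -- For any z, δ (z ^ p) is p times a multiple of δ z.
  have key : ∀ z : M, ∃ c : A, δ (z ^ p) = (p : A) * (δ z * c) := by
    intro z
    obtain ⟨t, ht⟩ := deltaLog_pow_aux p δ hδ z p hp.one_lt.le
    exact ⟨1 + δ z * t, by rw [ht]; ring⟩
  apply hsep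
  intro n hn
  obtain ⟨y, hy⟩ := hm n hn
  -- show by induction: δ (y ^ p ^ j) ∈ span {p ^ j}
  have main : ∀ j : ℕ, δ (y ^ p ^ j) ∈ Ideal.span {(p : A) ^ j} := by
    intro j
    induction j with
    | zero => simp
    | succ j ih =>
      obtain ⟨c, hc⟩ := key (y ^ p ^ j)
      have : δ (y ^ p ^ (j + 1)) = (p : A) * (δ (y ^ p ^ j) * c) := by
        rw [← hc, ← pow_mul, pow_succ]
      rw [this]
      obtain ⟨d, hd⟩ := Ideal.mem_span_singleton'.mp ih
      exact Ideal.mem_span_singleton'.mpr ⟨d * c, by rw [pow_succ, ← hd]; ring⟩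
  have := main n
  rwa [hy] at this
end

section
/- Let p be a prime, A a p-torsion free commutative ring, and M a finitely generated p-torsion free A-module such that M[1/p] is a finite projective A[1/p]-module. Then there exist an integer r ≥ 0, an injective A-linear map ι : M → A^r, and an A[1/p]-linear map ρ : (A[1/p])^r → M[1/p] such that ρ composed with the map M[1/p] → (A[1/p])^r induced by ι is the identity of M[1/p] (i.e. the localization of ι admits an A[1/p]-linear retraction). -/
/-- **Embedding into a finite free module with a retraction after inverting `p`.** Let `p` be a
prime, `A` a `p`-torsion free commutative ring, and `M` a finitely generated `p`-torsion free
`A`-module such that `M[1/p]` is a finite projective `A[1/p]`-module. Then there exist `r ≥ 0`,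
an injective `A`-linear map `ι : M → A^r`, and an `A[1/p]`-linear map
`ρ : (A[1/p])^r → M[1/p]` such that `ρ` composed with the localization of `ι` is the identity
of `M[1/p]`. -/
theorem exists_embedding_with_retraction_after_inverting_p
    (p : ℕ) (hp : p.Prime)
    {A : Type*} [CommRing A]
    (hAtf : Function.Injective fun a : A => (p : A) * a)
    {M : Type*} [AddCommGroup M] [Module A M] [Module.Finite A M]
    (hMtf : Function.Injective fun x : M => (p : A) • x)
    (hMfin : Module.Finite (Localization (Submonoid.powers (p : A)))
      (LocalizedModule (Submonoid.powers (p : A)) M))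
    (hMproj : Module.Projective (Localization (Submonoid.powers (p : A)))
      (LocalizedModule (Submonoid.powers (p : A)) M)) :
    ∃ (r : ℕ) (ι : M →ₗ[A] (Fin r → A)), Function.Injective ι ∧
      ∃ ρ : LocalizedModule (Submonoid.powers (p : A)) (Fin r → A)
          →ₗ[Localization (Submonoid.powers (p : A))]
            LocalizedModule (Submonoid.powers (p : A)) M,
        ∀ x : LocalizedModule (Submonoid.powers (p : A)) M,
          ρ (LocalizedModule.map (Submonoid.powers (p : A)) ι x) = x := by
  classical
  haveI := hMfin
  haveI := hMproj
  set S : Submonoid A := Submonoid.powers (p : A) with hSdef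
  set R : Type _ := Localization S with hRdef
  -- p is a nonzerodivisor
  have hp_nzd : (p : A) ∈ nonZeroDivisors A := by
    rw [mem_nonZeroDivisors_iff_right]
    intro a ha
    apply hAtf
    simpa [mul_comm] using ha
  have hS_nzd : S ≤ nonZeroDivisors A := by
    rintro x ⟨n, rfl⟩
    exact pow_mem hp_nzd n
  -- injectivity of powers of p on M
  have hpow_inj : ∀ (n : ℕ) (m m' : M), (p : A) ^ n • m = (p : A) ^ n • m' → m = m' := by
    intro n
    induction n with
    | zero => intro m m' h; simpa using h
    | succ n ih =>
      intro m m' h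
      rw [pow_succ, mul_smul, mul_smul] at h
      exact hMtf (ih _ _ h)
  -- the localization map M → M[1/p] is injective
  have hmk_inj : Function.Injective (LocalizedModule.mkLinearMap S M) := by
    intro m m' h
    rw [LocalizedModule.mkLinearMap_apply, LocalizedModule.mkLinearMap_apply,
      LocalizedModule.mk_eq] at h
    obtain ⟨u, hu⟩ := h
    obtain ⟨n, hn⟩ := u.2
    apply hpow_inj n
    have hu' : (u : A) • m = (u : A) • m' := by simpa [Submonoid.smul_def] using hu
    simpa [hn] using hu'
  -- split M[1/p] off a finite free R-module
  obtain ⟨r, π0, hπ0⟩ := Module.Finite.exists_fin' R (LocalizedModule S M)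
  obtain ⟨i, hi⟩ := Module.projective_lifting_property π0 LinearMap.id hπ0
  have hi_sect : ∀ x, π0 (i x) = x := fun x => by
    simpa using LinearMap.congr_fun hi x
  have hi_inj : Function.Injective i := fun x y hxy => by
    rw [← hi_sect x, ← hi_sect y, hxy]
  -- the componentwise localization map A^r → R^r
  let F : (Fin r → A) →ₗ[A] (Fin r → R) :=
    LinearMap.pi fun j => (Algebra.linearMap A R) ∘ₗ LinearMap.proj j
  have hFapp : ∀ (v : Fin r → A) (j : Fin r), F v j = algebraMap A R (v j) := fun v j => rfl
  have hFeq : F = (Finsupp.linearEquivFunOnFinite A R (Fin r)).toLinearMap ∘ₗ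
      (Finsupp.mapRange.linearMap (Algebra.linearMap A R)) ∘ₗ
      (Finsupp.linearEquivFunOnFinite A A (Fin r)).symm.toLinearMap := by
    refine LinearMap.ext fun v => funext fun j => ?_
    simp [F, Finsupp.linearEquivFunOnFinite]
    rfl
  haveI hFloc : IsLocalizedModule S F := hFeq ▸ inferInstance
  have hFinj : Function.Injective F := by
    intro v w hvw
    funext j
    exact IsLocalization.injective R hS_nzd (congrFun hvw j)
  -- generators of M
  obtain ⟨k, gens, hgens⟩ := Module.Finite.exists_fin (R := A) (M := M)
  -- the basic map M → R^r
  let h : M →ₗ[A] (Fin r → R) := (i.restrictScalars A) ∘ₗ LocalizedModule.mkLinearMap S M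
  have hh_inj : Function.Injective h := fun m m' e => hmk_inj (hi_inj e)
  -- common denominator
  obtain ⟨b, hb⟩ := IsLocalization.exist_integer_multiples_of_finite (M := S) (S := R)
    (fun q : Fin k × Fin r => h (gens q.1) q.2)
  let f : M →ₗ[A] (Fin r → R) := (b : A) • h
  have hb_unit : IsUnit (algebraMap A R (b : A)) := IsLocalization.map_units R b
  have hrange : ∀ m : M, f m ∈ LinearMap.range F := by
    have hle : (⊤ : Submodule A M) ≤ (LinearMap.range F).comap f := by
      rw [← hgens, Submodule.span_le]
      rintro _ ⟨j, rfl⟩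
      have hex : ∀ q : Fin r, ∃ a : A, algebraMap A R a = f (gens j) q := by
        intro q
        obtain ⟨a, ha⟩ := hb (j, q)
        exact ⟨a, by simpa [f] using ha⟩
      choose v hv using hex
      exact ⟨v, funext fun q => hv q⟩
    intro m; exact hle trivial
  -- the embedding
  let ι : M →ₗ[A] (Fin r → A) :=
    (LinearEquiv.ofInjective F hFinj).symm.toLinearMap ∘ₗ
      f.codRestrict (LinearMap.range F) hrange
  have hFι : ∀ m : M, F (ι m) = f m := fun m => by
    have h1 : (LinearEquiv.ofInjective F hFinj) (ι m)
        = f.codRestrict (LinearMap.range F) hrange m :=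
      (LinearEquiv.ofInjective F hFinj).apply_symm_apply _
    calc F (ι m) = ((LinearEquiv.ofInjective F hFinj) (ι m) : Fin r → R) :=
          (LinearEquiv.ofInjective_apply F (ι m)).symm
      _ = f m := by rw [h1]; rfl
  have hf_inj : Function.Injective f := by
    intro m m' e
    apply hh_inj
    funext j
    have ej : (b : A) • h m j = (b : A) • h m' j := by
      have := congrFun e j
      simpa [f] using this
    have e2 : algebraMap A R (b : A) * h m j = algebraMap A R (b : A) * h m' j := by
      simpa [Algebra.smul_def] using ej
    exact hb_unit.mul_left_cancel e2
  have hι_inj : Function.Injective ι := fun m m' e => hf_inj (by rw [← hFι m, ← hFι m', e])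
  -- the retraction
  let iso := IsLocalizedModule.iso S F
  have hiso : ∀ v : Fin r → A, iso (LocalizedModule.mk v 1) = F v := by
    intro v
    have h2 : (iso.symm.toLinearMap ∘ₗ F) v = LocalizedModule.mkLinearMap S (Fin r → A) v :=
      LinearMap.congr_fun (IsLocalizedModule.iso_symm_comp S F) v
    have h3 : iso.symm (F v) = LocalizedModule.mk v 1 := by simpa using h2
    rw [← h3, iso.apply_symm_apply]
  let L0 : LocalizedModule S (Fin r → A) →ₗ[A] LocalizedModule S M :=
    (π0.restrictScalars A) ∘ₗ iso.toLinearMap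
  let L : LocalizedModule S (Fin r → A) →ₗ[R] LocalizedModule S M :=
    L0.extendScalarsOfIsLocalization S R
  let ρ : LocalizedModule S (Fin r → A) →ₗ[R] LocalizedModule S M :=
    (((hb_unit.unit⁻¹ : Rˣ) : R)) • L
  refine ⟨r, ι, hι_inj, ρ, ?_⟩
  have hcore : ∀ m : M, ρ (LocalizedModule.mk (ι m) 1) = LocalizedModule.mk m 1 := by
    intro m
    have hL : L (LocalizedModule.mk (ι m) 1) = (b : A) • LocalizedModule.mk m 1 := by
      show L0 (LocalizedModule.mk (ι m) 1) = _
      show π0 (iso (LocalizedModule.mk (ι m) 1)) = _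
      rw [hiso, hFι]
      show π0 ((b : A) • h m) = _
      rw [LinearMap.map_smul_of_tower]
      congr 1
      exact hi_sect _
    show (((hb_unit.unit⁻¹ : Rˣ) : R)) • L (LocalizedModule.mk (ι m) 1) = _
    rw [hL]
    rw [← algebraMap_smul R (b : A) (LocalizedModule.mk m (1 : S)), ← mul_smul]
    rw [hb_unit.val_inv_mul, one_smul]
  intro x
  refine LocalizedModule.induction_on ?_ x
  intro m s
  rw [LocalizedModule.map_mk]
  have hms : LocalizedModule.mk (ι m) s
      = Localization.mk 1 s • LocalizedModule.mk (ι m) (1 : S) := by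
    rw [LocalizedModule.mk_smul_mk, one_smul, mul_one]
  have hms' : LocalizedModule.mk m s
      = Localization.mk 1 s • LocalizedModule.mk m (1 : S) := by
    rw [LocalizedModule.mk_smul_mk, one_smul, mul_one]
  rw [hms, map_smul, hcore, ← hms']
end
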